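/- Let n be an integer with n ≥ 2 and define g : ℝ² → ℝ by g(x,y) := Im((x + iy)^n), the imaginary part of the n-th power of the complex number x + iy. Then g has a strict saddle point at (0,0); moreover, for n = 1 the function g(x,y) = y does not have a saddle point at (0,0). -/

import Mathlib

open Set Filter Topology

/-- `γ : [a, b] → D` is a regular path in `D`: it is continuous on `[a, b]`, maps `[a, b]`
into `D`, is differentiable on `(a, b)`, and its derivative is nonvanishing on `(a, b)`. -/
def IsRegularPath (D : Set (ℝ × ℝ)) (γ : ℝ → ℝ × ℝ) (a b : ℝ) : Prop :=
  a < b ∧ ContinuousOn γ (Set.Icc a b) ∧ Set.MapsTo γ (Set.Icc a b) D ∧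
    ∀ t ∈ Set.Ioo a b, DifferentiableAt ℝ γ t ∧ deriv γ t ≠ 0

/-- A function of one real variable has a strict local maximum at `t`. -/
def IsStrictLocalMax (g : ℝ → ℝ) (t : ℝ) : Prop :=
  ∀ᶠ s in 𝓝[≠] t, g s < g t

/-- A function of one real variable has a strict local minimum at `t`. -/
def IsStrictLocalMin (g : ℝ → ℝ) (t : ℝ) : Prop :=
  ∀ᶠ s in 𝓝[≠] t, g t < g s

/-- `f` has a saddle point at `p`: there are regular paths `γ₁, γ₂` in `D` passing through `p`
and intersecting transversally at `p` (their tangent vectors at `p` are not multiples of each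
other) such that `f` has a local maximum at `p` along `γ₁` and a local minimum at `p`
along `γ₂`. -/
def HasSaddleAt (D : Set (ℝ × ℝ)) (f : ℝ × ℝ → ℝ) (p : ℝ × ℝ) : Prop :=
  ∃ (a₁ b₁ a₂ b₂ t₁ t₂ : ℝ) (γ₁ γ₂ : ℝ → ℝ × ℝ),
    IsRegularPath D γ₁ a₁ b₁ ∧ IsRegularPath D γ₂ a₂ b₂ ∧
    t₁ ∈ Set.Ioo a₁ b₁ ∧ t₂ ∈ Set.Ioo a₂ b₂ ∧ γ₁ t₁ = p ∧ γ₂ t₂ = p ∧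
    (∀ c : ℝ, deriv γ₁ t₁ ≠ c • deriv γ₂ t₂) ∧
    (∀ c : ℝ, deriv γ₂ t₂ ≠ c • deriv γ₁ t₁) ∧
    IsLocalMax (f ∘ γ₁) t₁ ∧ IsLocalMin (f ∘ γ₂) t₂

/-- `f` has a strict saddle point at `p`: as for a saddle point, but with a strict local
maximum along `γ₁` and a strict local minimum along `γ₂`. -/
def HasStrictSaddleAt (D : Set (ℝ × ℝ)) (f : ℝ × ℝ → ℝ) (p : ℝ × ℝ) : Prop :=
  ∃ (a₁ b₁ a₂ b₂ t₁ t₂ : ℝ) (γ₁ γ₂ : ℝ → ℝ × ℝ),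
    IsRegularPath D γ₁ a₁ b₁ ∧ IsRegularPath D γ₂ a₂ b₂ ∧
    t₁ ∈ Set.Ioo a₁ b₁ ∧ t₂ ∈ Set.Ioo a₂ b₂ ∧ γ₁ t₁ = p ∧ γ₂ t₂ = p ∧
    (∀ c : ℝ, deriv γ₁ t₁ ≠ c • deriv γ₂ t₂) ∧
    (∀ c : ℝ, deriv γ₂ t₂ ≠ c • deriv γ₁ t₁) ∧
    IsStrictLocalMax (f ∘ γ₁) t₁ ∧ IsStrictLocalMin (f ∘ γ₂) t₂

/-- For `n ≥ 2`, the function `g(x, y) = Im((x + iy)^n)` has a strict saddle point at the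
origin; moreover, for `n = 1` the function `g(x, y) = Im(x + iy) = y` does not have a
saddle point at the origin. -/
noncomputable def pth (θ t : ℝ) : ℝ × ℝ := (t * Real.cos (θ - t), t * Real.sin (θ - t))

lemma pth_hasDerivAt (θ t : ℝ) :
    HasDerivAt (pth θ)
      (Real.cos (θ - t) + t * Real.sin (θ - t), Real.sin (θ - t) - t * Real.cos (θ - t)) t := by
  have hsub : HasDerivAt (fun t : ℝ => θ - t) (-1) t := by
    exact (hasDerivAt_id' t).const_sub θ
  have hcos : HasDerivAt (fun t : ℝ => Real.cos (θ - t)) (Real.sin (θ - t)) t := by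
    have := (Real.hasDerivAt_cos (θ - t)).comp t hsub
    convert this using 1
    all_goals first | rfl | ring
  have hsin : HasDerivAt (fun t : ℝ => Real.sin (θ - t)) (-Real.cos (θ - t)) t := by
    have := (Real.hasDerivAt_sin (θ - t)).comp t hsub
    convert this using 1
    all_goals first | rfl | ring
  have h1 : HasDerivAt (fun t : ℝ => t * Real.cos (θ - t))
      (Real.cos (θ - t) + t * Real.sin (θ - t)) t := by
    have := (hasDerivAt_id' t).mul hcos
    convert this using 1
    all_goals first | rfl | ring
  have h2 : HasDerivAt (fun t : ℝ => t * Real.sin (θ - t))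
      (Real.sin (θ - t) - t * Real.cos (θ - t)) t := by
    have := (hasDerivAt_id' t).mul hsin
    convert this using 1
    all_goals first | rfl | ring
  exact h1.prodMk h2

lemma deriv_pth (θ t : ℝ) : deriv (pth θ) t
    = (Real.cos (θ - t) + t * Real.sin (θ - t), Real.sin (θ - t) - t * Real.cos (θ - t)) :=
  (pth_hasDerivAt θ t).deriv

lemma deriv_pth_zero (θ : ℝ) : deriv (pth θ) 0 = (Real.cos θ, Real.sin θ) := by
  simp [deriv_pth]

lemma pth_regular (θ a b : ℝ) (hab : a < b) : IsRegularPath Set.univ (pth θ) a b := by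
  refine ⟨hab, ?_, fun _ _ => mem_univ _, fun t _ => ⟨(pth_hasDerivAt θ t).differentiableAt, ?_⟩⟩
  · have : Continuous (pth θ) := by unfold pth; continuity
    exact this.continuousOn
  · rw [deriv_pth]
    intro h
    rw [Prod.ext_iff] at h
    obtain ⟨h1, h2⟩ := h
    simp only [Prod.fst_zero, Prod.snd_zero] at h1 h2
    nlinarith [Real.sin_sq_add_cos_sq (θ - t), sq_nonneg t]

lemma im_pow (n : ℕ) (t φ : ℝ) :
    ((((t * Real.cos φ : ℝ) : ℂ) + ((t * Real.sin φ : ℝ) : ℂ) * Complex.I) ^ n).im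
      = t ^ n * Real.sin (n * φ) := by
  have h : ((t * Real.cos φ : ℝ) : ℂ) + ((t * Real.sin φ : ℝ) : ℂ) * Complex.I
      = (t : ℂ) * Complex.exp (φ * Complex.I) := by
    rw [Complex.exp_mul_I]; push_cast; ring
  rw [h, mul_pow, ← Complex.exp_nat_mul]
  have h2 : (n : ℂ) * (↑φ * Complex.I) = ((n * φ : ℝ) : ℂ) * Complex.I := by push_cast; ring
  have h3 : ((t : ℂ) ^ n * Complex.exp ((n : ℂ) * (↑φ * Complex.I)))
      = ((t ^ n * Real.cos (n * φ) : ℝ) : ℂ) + ((t ^ n * Real.sin (n * φ) : ℝ) : ℂ) * Complex.I := by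
    rw [h2, Complex.exp_mul_I, ← Complex.ofReal_cos, ← Complex.ofReal_sin]
    push_cast; ring
  rw [h3]
  simp only [Complex.add_im, Complex.ofReal_im, Complex.mul_I_im, Complex.ofReal_re, zero_add]

lemma comp_pth (n : ℕ) (θ s : ℝ) :
    ((fun q : ℝ × ℝ => (((q.1 : ℂ) + (q.2 : ℂ) * Complex.I) ^ n).im) ∘ pth θ) s
      = s ^ n * Real.sin (n * (θ - s)) := by
  simp only [Function.comp_apply, pth]
  exact im_pow n s (θ - s)

lemma not_par (θ₁ θ₂ : ℝ) (h : Real.sin (θ₂ - θ₁) ≠ 0) (c : ℝ) :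
    ((Real.cos θ₁, Real.sin θ₁) : ℝ × ℝ) ≠ c • ((Real.cos θ₂, Real.sin θ₂) : ℝ × ℝ) := by
  intro he
  rw [Prod.ext_iff] at he
  obtain ⟨h1, h2⟩ := he
  simp only [Prod.smul_fst, Prod.smul_snd, smul_eq_mul] at h1 h2
  apply h
  rw [Real.sin_sub, h1, h2]; ring
lemma pos_even {n : ℕ} (hn : 2 ≤ n) (he : Even n) {s : ℝ} (hs : s ≠ 0)
    (hlt : |s| < Real.pi / (2 * n)) : 0 < s ^ n * Real.cos (n * s) := by
  have hn0 : 0 < (n : ℝ) := by positivity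
  have habs : |(n : ℝ) * s| < Real.pi / 2 := by
    rw [abs_mul, abs_of_pos hn0]
    calc (n : ℝ) * |s| < n * (Real.pi / (2 * n)) := by
          exact mul_lt_mul_of_pos_left hlt hn0
      _ = Real.pi / 2 := by field_simp
  have hcos : 0 < Real.cos (n * s) :=
    Real.cos_pos_of_mem_Ioo ⟨by linarith [abs_lt.mp habs |>.1], abs_lt.mp habs |>.2⟩
  exact mul_pos (he.pow_pos hs) hcos

lemma pos_odd {n : ℕ} (hn : 2 ≤ n) (ho : Odd n) {s : ℝ} (hs : s ≠ 0)
    (hlt : |s| < Real.pi / (2 * n)) : 0 < s ^ n * Real.sin (n * s) := by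
  have hn0 : 0 < (n : ℝ) := by positivity
  have habs : |(n : ℝ) * s| < Real.pi / 2 := by
    rw [abs_mul, abs_of_pos hn0]
    calc (n : ℝ) * |s| < n * (Real.pi / (2 * n)) := mul_lt_mul_of_pos_left hlt hn0
      _ = Real.pi / 2 := by field_simp
  obtain ⟨h1, h2⟩ := abs_lt.mp habs
  rcases hs.lt_or_gt with hneg | hpos
  · have hsin : Real.sin ((n : ℝ) * s) < 0 := by
      apply Real.sin_neg_of_neg_of_neg_pi_lt
      · exact mul_neg_of_pos_of_neg hn0 hneg
      · linarith [Real.pi_pos]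
    exact mul_pos_of_neg_of_neg (ho.pow_neg hneg) hsin
  · have hsin : 0 < Real.sin ((n : ℝ) * s) := by
      apply Real.sin_pos_of_pos_of_lt_pi (mul_pos hn0 hpos)
      linarith [Real.pi_pos]
    exact mul_pos (by positivity) hsin

lemma saddle_aux (n : ℕ) (hn : 2 ≤ n) (θ₁ θ₂ : ℝ)
    (hsin : Real.sin (θ₂ - θ₁) ≠ 0)
    (hmax : ∀ s : ℝ, s ≠ 0 → |s| < Real.pi / (2 * n) → s ^ n * Real.sin (n * (θ₁ - s)) < 0)
    (hmin : ∀ s : ℝ, s ≠ 0 → |s| < Real.pi / (2 * n) → 0 < s ^ n * Real.sin (n * (θ₂ - s))) :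
    HasStrictSaddleAt Set.univ
      (fun q : ℝ × ℝ => (((q.1 : ℂ) + (q.2 : ℂ) * Complex.I) ^ n).im) (0, 0) := by
  have hδ : 0 < Real.pi / (2 * n) := by
    have : 0 < (n : ℝ) := by positivity
    positivity
  set δ := Real.pi / (2 * n) with hδdef
  have hmem : Set.Ioo (-δ) δ ∈ 𝓝 (0 : ℝ) := Ioo_mem_nhds (by linarith) hδ
  have hzero : ∀ θ, pth θ 0 = (0, 0) := fun θ => by simp [pth]
  have hsin' : Real.sin (θ₁ - θ₂) ≠ 0 := by
    rw [show θ₁ - θ₂ = -(θ₂ - θ₁) by ring, Real.sin_neg]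
    simpa using hsin
  have hn0 : n ≠ 0 := by omega
  refine ⟨-δ, δ, -δ, δ, 0, 0, pth θ₁, pth θ₂, pth_regular _ _ _ (by linarith),
    pth_regular _ _ _ (by linarith), ⟨by linarith, hδ⟩, ⟨by linarith, hδ⟩,
    hzero θ₁, hzero θ₂, ?_, ?_, ?_, ?_⟩
  · rw [deriv_pth_zero, deriv_pth_zero]
    exact not_par θ₁ θ₂ hsin
  · rw [deriv_pth_zero, deriv_pth_zero]
    exact not_par θ₂ θ₁ hsin'
  · filter_upwards [mem_nhdsWithin_of_mem_nhds hmem, self_mem_nhdsWithin] with s hs hs0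
    rw [comp_pth, comp_pth]
    have : (0 : ℝ) ^ n * Real.sin (n * (θ₁ - 0)) = 0 := by
      rw [zero_pow hn0]; ring
    rw [this]
    exact hmax s hs0 (abs_lt.mpr ⟨hs.1, hs.2⟩)
  · filter_upwards [mem_nhdsWithin_of_mem_nhds hmem, self_mem_nhdsWithin] with s hs hs0
    rw [comp_pth, comp_pth]
    have : (0 : ℝ) ^ n * Real.sin (n * (θ₂ - 0)) = 0 := by
      rw [zero_pow hn0]; ring
    rw [this]
    exact hmin s hs0 (abs_lt.mpr ⟨hs.1, hs.2⟩)
theorem im_power_saddle (n : ℕ) (hn : 2 ≤ n) :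
    HasStrictSaddleAt Set.univ
      (fun q : ℝ × ℝ => (((q.1 : ℂ) + (q.2 : ℂ) * Complex.I) ^ n).im) (0, 0) ∧
    ¬ HasSaddleAt Set.univ
      (fun q : ℝ × ℝ => (((q.1 : ℂ) + (q.2 : ℂ) * Complex.I) ^ 1).im) (0, 0) := by
  have hn0 : (0 : ℝ) < n := by positivity
  have hπ := Real.pi_pos
  have hπn : 0 < Real.pi / n := by positivity
  have hπn' : Real.pi / n < Real.pi := by
    rw [div_lt_iff₀ hn0]
    nlinarith [Real.pi_pos, show (2:ℝ) ≤ n by exact_mod_cast hn]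
  have hsinπn : Real.sin (Real.pi / n) ≠ 0 :=
    ne_of_gt (Real.sin_pos_of_pos_of_lt_pi hπn hπn')
  constructor
  · rcases Nat.even_or_odd n with he | ho
    · apply saddle_aux n hn (-(Real.pi / (2 * n))) (Real.pi / (2 * n))
      · rw [show Real.pi / (2 * n) - -(Real.pi / (2 * n)) = Real.pi / n by field_simp; ring]
        exact hsinπn
      · intro s hs hlt
        have h1 : (n : ℝ) * (-(Real.pi / (2 * n)) - s) = -(Real.pi / 2 + n * s) := by
          field_simp; ring
        rw [h1, Real.sin_neg, show Real.sin (Real.pi / 2 + (n : ℝ) * s)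
            = Real.cos ((n : ℝ) * s) by rw [Real.sin_add]; simp]
        nlinarith [pos_even hn he hs hlt]
      · intro s hs hlt
        have h1 : (n : ℝ) * (Real.pi / (2 * n) - s) = Real.pi / 2 - n * s := by
          field_simp
        rw [h1, Real.sin_pi_div_two_sub]
        exact pos_even hn he hs hlt
    · apply saddle_aux n hn 0 (Real.pi / n)
      · simpa using hsinπn
      · intro s hs hlt
        have h1 : (n : ℝ) * ((0 : ℝ) - s) = -((n : ℝ) * s) := by ring
        rw [h1, Real.sin_neg]
        nlinarith [pos_odd hn ho hs hlt]
      · intro s hs hlt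
        have h1 : (n : ℝ) * (Real.pi / n - s) = Real.pi - (n : ℝ) * s := by
          field_simp
        rw [h1, Real.sin_pi_sub]
        exact pos_odd hn ho hs hlt
  · rintro ⟨a₁, b₁, a₂, b₂, t₁, t₂, γ₁, γ₂, hr1, hr2, ht1, ht2, hp1, hp2, hc1, _, hmax, hmin⟩
    have hf : (fun q : ℝ × ℝ => (((q.1 : ℂ) + (q.2 : ℂ) * Complex.I) ^ 1).im)
        = fun q : ℝ × ℝ => q.2 := by
      funext q; simp
    rw [hf] at hmax hmin
    obtain ⟨hd1, hne1⟩ := hr1.2.2.2 t₁ ht1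
    obtain ⟨hd2, hne2⟩ := hr2.2.2.2 t₂ ht2
    have hsnd1 : HasDerivAt (fun t => (γ₁ t).2) (deriv γ₁ t₁).2 t₁ := hd1.hasDerivAt.snd
    have hsnd2 : HasDerivAt (fun t => (γ₂ t).2) (deriv γ₂ t₂).2 t₂ := hd2.hasDerivAt.snd
    have hz1 : (deriv γ₁ t₁).2 = 0 := hmax.hasDerivAt_eq_zero hsnd1
    have hz2 : (deriv γ₂ t₂).2 = 0 := hmin.hasDerivAt_eq_zero hsnd2
    have hf2 : (deriv γ₂ t₂).1 ≠ 0 := by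
      intro h
      exact hne2 (Prod.ext h hz2)
    apply hc1 ((deriv γ₁ t₁).1 / (deriv γ₂ t₂).1)
    apply Prod.ext
    · simp [smul_eq_mul, div_mul_cancel₀ _ hf2]
    · simp [hz1, hz2]
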